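/- In the general noisy-response setting, for any σ, σ̃ > 0, any θ ∈ ℝ^d, and any measurable set A ⊆ E × {0,1}, |D_σ(θ)(A) − D_{σ̃}(θ)(A)| ≤ (1/2)·√(|σ² − σ̃²|·d / min(σ², σ̃²)). -/

import Mathlib

open MeasureTheory ProbabilityTheory

open Fintype Real
open scoped ENNReal NNReal Real

theorem lintegral_fin_prod {n : ℕ} {α : Fin n → Type*} [∀ i, MeasurableSpace (α i)]
    (μ : ∀ i, Measure (α i)) [∀ i, SigmaFinite (μ i)]
    (f : ∀ i, α i → ℝ≥0∞) (hf : ∀ i, Measurable (f i)) :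
    ∫⁻ x, ∏ i, f i (x i) ∂Measure.pi μ = ∏ i, ∫⁻ x, f i x ∂(μ i) := by
  induction n with
  | zero => simp [lintegral_const, Measure.pi_univ]
  | succ n ih =>
      calc
        _ = ∫⁻ x : α 0 × ((i : Fin n) → α (Fin.succ i)),
            f 0 x.1 * ∏ i : Fin n, f (Fin.succ i) (x.2 i)
              ∂((μ 0).prod (Measure.pi fun i => μ (Fin.succ i))) := by
          rw [← ((measurePreserving_piFinSuccAbove μ 0).symm).lintegral_comp_emb
            (MeasurableEquiv.measurableEmbedding _)]
          simp_rw [MeasurableEquiv.piFinSuccAbove_symm_apply, Fin.insertNthEquiv,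
            Fin.prod_univ_succ, Fin.insertNth_zero, Equiv.coe_fn_mk, Fin.cons_succ,
            Fin.zero_succAbove, Fin.cons_zero]
          rfl
        _ = (∫⁻ x, f 0 x ∂(μ 0)) * ∏ i : Fin n, ∫⁻ x, f (Fin.succ i) x ∂(μ (Fin.succ i)) := by
          have h2 := lintegral_prod_mul (μ := μ 0) (ν := Measure.pi fun i => μ (Fin.succ i))
              (f := f 0) (g := fun y => ∏ i : Fin n, f (Fin.succ i) (y i))
              (hf 0).aemeasurable
              (Finset.measurable_prod Finset.univ
                (fun i _ => (hf _).comp (measurable_pi_apply i))).aemeasurable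
          rw [h2, ih (fun i => μ (Fin.succ i)) (fun i => f (Fin.succ i)) (fun i => hf _)]
        _ = ∏ i, ∫⁻ x, f i x ∂(μ i) := by rw [Fin.prod_univ_succ]

theorem pi_withDensity_fin {n : ℕ} {α : Fin n → Type*} [∀ i, MeasurableSpace (α i)]
    (μ : ∀ i, Measure (α i)) [∀ i, SigmaFinite (μ i)]
    (f : ∀ i, α i → ℝ≥0∞) (hf : ∀ i, Measurable (f i))
    [∀ i, SigmaFinite ((μ i).withDensity (f i))] :
    (Measure.pi μ).withDensity (fun x => ∏ i, f i (x i)) =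
      Measure.pi (fun i => (μ i).withDensity (f i)) := by
  refine (Measure.pi_eq fun s hs => ?_).symm
  have hbox : MeasurableSet (Set.pi Set.univ s) := MeasurableSet.univ_pi hs
  rw [withDensity_apply _ hbox, ← lintegral_indicator hbox]
  have hpt : ∀ x : (i : Fin n) → α i,
      (Set.pi Set.univ s).indicator (fun x => ∏ i, f i (x i)) x
        = ∏ i, (s i).indicator (f i) (x i) := by
    intro x
    by_cases hx : x ∈ Set.pi Set.univ s
    · rw [Set.indicator_of_mem hx]
      exact Finset.prod_congr rfl fun i _ =>
        (Set.indicator_of_mem (hx i (Set.mem_univ i)) _).symm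
    · rw [Set.indicator_of_notMem hx]
      have hex : ∃ i, x i ∉ s i := by
        by_contra h
        push_neg at h
        exact hx fun i _ => h i
      obtain ⟨i, hi⟩ := hex
      exact (Finset.prod_eq_zero (Finset.mem_univ i)
        (Set.indicator_of_notMem hi _)).symm
  simp_rw [hpt]
  rw [lintegral_fin_prod μ _ (fun i => (hf i).indicator (hs i))]
  exact Finset.prod_congr rfl fun i _ => by
    rw [lintegral_indicator (hs i), withDensity_apply _ (hs i)]

theorem sqrt_prod' {ι : Type*} (s : Finset ι) (g : ι → ℝ) (hg : ∀ i, 0 ≤ g i) :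
    Real.sqrt (∏ i ∈ s, g i) = ∏ i ∈ s, Real.sqrt (g i) := by
  induction s using Finset.cons_induction with
  | empty => simp
  | cons a s ha ih => rw [Finset.prod_cons, Finset.prod_cons, Real.sqrt_mul (hg a), ih]

theorem gauss_pointwise (σ σt : ℝ) (hσ : 0 < σ) (hσt : 0 < σt) (x : ℝ) :
    Real.sqrt (gaussianPDFReal 0 ⟨σ^2, sq_nonneg σ⟩ x *
      gaussianPDFReal 0 ⟨σt^2, sq_nonneg σt⟩ x)
      = (Real.sqrt (2*π*(σ*σt)))⁻¹ *
        Real.exp (-x^2 / (2*(2*σ^2*σt^2/(σ^2+σt^2)))) := by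
  have hπ := Real.pi_pos
  unfold gaussianPDFReal
  show Real.sqrt ((Real.sqrt (2*π*σ^2))⁻¹ * rexp (-(x-0)^2 / (2*σ^2)) *
      ((Real.sqrt (2*π*σt^2))⁻¹ * rexp (-(x-0)^2 / (2*σt^2)))) = _
  have hc1 : Real.sqrt (2*π*σ^2) = Real.sqrt (2*π) * σ := by
    rw [Real.sqrt_mul (by positivity), Real.sqrt_sq hσ.le]
  have hc2 : Real.sqrt (2*π*σt^2) = Real.sqrt (2*π) * σt := by
    rw [Real.sqrt_mul (by positivity), Real.sqrt_sq hσt.le]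
  rw [hc1, hc2]
  have hsq : Real.sqrt (2*π) * Real.sqrt (2*π) = 2*π := Real.mul_self_sqrt (by positivity)
  have hcomb : (Real.sqrt (2*π) * σ)⁻¹ * rexp (-(x-0)^2 / (2*σ^2)) *
      ((Real.sqrt (2*π) * σt)⁻¹ * rexp (-(x-0)^2 / (2*σt^2))) =
      (2*π*(σ*σt))⁻¹ * rexp (2 * (-x^2 / (2*(2*σ^2*σt^2/(σ^2+σt^2))))) := by
    have he : -(x-0)^2 / (2*σ^2) + -(x-0)^2 / (2*σt^2)
        = 2 * (-x^2 / (2*(2*σ^2*σt^2/(σ^2+σt^2)))) := by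
      field_simp
      ring
    have hmul : (Real.sqrt (2*π) * σ)⁻¹ * (Real.sqrt (2*π) * σt)⁻¹ = (2*π*(σ*σt))⁻¹ := by
      rw [← mul_inv]
      congr 1
      calc Real.sqrt (2*π) * σ * (Real.sqrt (2*π) * σt)
          = (Real.sqrt (2*π) * Real.sqrt (2*π)) * (σ * σt) := by ring
        _ = 2*π*(σ*σt) := by rw [hsq]
    calc (Real.sqrt (2*π) * σ)⁻¹ * rexp (-(x-0)^2 / (2*σ^2)) *
          ((Real.sqrt (2*π) * σt)⁻¹ * rexp (-(x-0)^2 / (2*σt^2)))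
        = ((Real.sqrt (2*π) * σ)⁻¹ * (Real.sqrt (2*π) * σt)⁻¹) *
          (rexp (-(x-0)^2 / (2*σ^2)) * rexp (-(x-0)^2 / (2*σt^2))) := by ring
      _ = (2*π*(σ*σt))⁻¹ * rexp (-(x-0)^2 / (2*σ^2) + -(x-0)^2 / (2*σt^2)) := by
          rw [hmul, ← Real.exp_add]
      _ = _ := by rw [he]
  rw [hcomb]
  rw [Real.sqrt_mul (by positivity) , Real.sqrt_inv]
  congr 1
  rw [show (2:ℝ) * (-x^2 / (2*(2*σ^2*σt^2/(σ^2+σt^2)))) =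
      (-x^2 / (2*(2*σ^2*σt^2/(σ^2+σt^2)))) + (-x^2 / (2*(2*σ^2*σt^2/(σ^2+σt^2)))) from by ring,
    Real.exp_add]
  exact Real.sqrt_mul_self (Real.exp_nonneg _)

theorem gauss_hellinger (σ σt : ℝ) (hσ : 0 < σ) (hσt : 0 < σt) :
    ∫ x : ℝ, Real.sqrt (gaussianPDFReal 0 ⟨σ^2, sq_nonneg σ⟩ x *
      gaussianPDFReal 0 ⟨σt^2, sq_nonneg σt⟩ x)
      = Real.sqrt (2*σ*σt/(σ^2+σt^2)) := by
  have hπ := Real.pi_pos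
  simp_rw [gauss_pointwise σ σt hσ hσt]
  have h : ∀ x:ℝ, -x^2 / (2*(2*σ^2*σt^2/(σ^2+σt^2)))
      = -((2*(2*σ^2*σt^2/(σ^2+σt^2)))⁻¹) * x^2 := fun x => by ring
  simp_rw [h]
  rw [integral_const_mul, integral_gaussian]
  rw [← Real.sqrt_inv, ← Real.sqrt_mul (by positivity)]
  congr 1
  field_simp

theorem gauss_hell_integrable (σ σt : ℝ) (hσ : 0 < σ) (hσt : 0 < σt) :
    Integrable (fun x : ℝ => Real.sqrt (gaussianPDFReal 0 ⟨σ^2, sq_nonneg σ⟩ x *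
      gaussianPDFReal 0 ⟨σt^2, sq_nonneg σt⟩ x)) := by
  simp_rw [gauss_pointwise σ σt hσ hσt]
  apply Integrable.const_mul
  have h : ∀ x:ℝ, -x^2 / (2*(2*σ^2*σt^2/(σ^2+σt^2)))
      = -((2*(2*σ^2*σt^2/(σ^2+σt^2)))⁻¹) * x^2 := fun x => by ring
  simp_rw [h]
  exact integrable_exp_neg_mul_sq (by positivity)

theorem gauss_pi_diff {d : ℕ} (σ σt : ℝ) (hσ : 0 < σ) (hσt : 0 < σt)
    (T : Set (Fin d → ℝ)) (hT : MeasurableSet T) :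
    Measure.pi (fun _ : Fin d => gaussianReal 0 ⟨σ^2, sq_nonneg σ⟩) T ≤
      Measure.pi (fun _ : Fin d => gaussianReal 0 ⟨σt^2, sq_nonneg σt⟩) T
        + ENNReal.ofReal (Real.sqrt (2 - 2 * Real.sqrt (2*σ*σt/(σ^2+σt^2)) ^ d)) := by
  classical
  set v : ℝ≥0 := ⟨σ^2, sq_nonneg σ⟩ with hv_def
  set w : ℝ≥0 := ⟨σt^2, sq_nonneg σt⟩ with hw_def
  have hv : v ≠ 0 := by
    intro h
    have h2 : (v:ℝ) = 0 := by rw [h]; simp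
    have h3 : (v:ℝ) = σ^2 := rfl
    nlinarith
  have hw : w ≠ 0 := by
    intro h
    have h2 : (w:ℝ) = 0 := by rw [h]; simp
    have h3 : (w:ℝ) = σt^2 := rfl
    nlinarith
  set p : ℝ → ℝ := gaussianPDFReal 0 v with hp_def
  set q : ℝ → ℝ := gaussianPDFReal 0 w with hq_def
  have hpm : Measurable p := measurable_gaussianPDFReal 0 v
  have hqm : Measurable q := measurable_gaussianPDFReal 0 w
  have hp0 : ∀ x, 0 ≤ p x := gaussianPDFReal_nonneg 0 v
  have hq0 : ∀ x, 0 ≤ q x := gaussianPDFReal_nonneg 0 w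
  set P : (Fin d → ℝ) → ℝ := fun x => ∏ i, p (x i) with hP_def
  set Q : (Fin d → ℝ) → ℝ := fun x => ∏ i, q (x i) with hQ_def
  set R : (Fin d → ℝ) → ℝ := fun x => ∏ i, Real.sqrt (p (x i) * q (x i)) with hR_def
  have hP0 : ∀ x, 0 ≤ P x := fun x => Finset.prod_nonneg fun i _ => hp0 _
  have hQ0 : ∀ x, 0 ≤ Q x := fun x => Finset.prod_nonneg fun i _ => hq0 _
  have hR0 : ∀ x, 0 ≤ R x := fun x => Finset.prod_nonneg fun i _ => Real.sqrt_nonneg _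
  have hPm : Measurable P := Finset.measurable_prod _ fun i _ => hpm.comp (measurable_pi_apply i)
  have hQm : Measurable Q := Finset.measurable_prod _ fun i _ => hqm.comp (measurable_pi_apply i)
  have hRm : Measurable R := Finset.measurable_prod _ fun i _ =>
    ((hpm.comp (measurable_pi_apply i)).mul (hqm.comp (measurable_pi_apply i))).sqrt
  -- sqrt of products
  have hSP : ∀ x, Real.sqrt (P x) = ∏ i, Real.sqrt (p (x i)) := fun x =>
    sqrt_prod' Finset.univ _ (fun i => hp0 _)
  have hSQ : ∀ x, Real.sqrt (Q x) = ∏ i, Real.sqrt (q (x i)) := fun x =>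
    sqrt_prod' Finset.univ _ (fun i => hq0 _)
  have hRP : ∀ x, R x = Real.sqrt (P x) * Real.sqrt (Q x) := by
    intro x
    rw [hSP, hSQ, ← Finset.prod_mul_distrib]
    exact Finset.prod_congr rfl fun i _ => Real.sqrt_mul (hp0 _) _
  -- the gaussian product measures as densities
  have hGv : Measure.pi (fun _ : Fin d => gaussianReal 0 v)
      = (volume : Measure (Fin d → ℝ)).withDensity (fun x => ENNReal.ofReal (P x)) := by
    haveI hsf : ∀ _i : Fin d, SigmaFinite ((volume : Measure ℝ).withDensity (gaussianPDF 0 v)) := by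
      intro i
      rw [← gaussianReal_of_var_ne_zero 0 hv]
      infer_instance
    calc Measure.pi (fun _ : Fin d => gaussianReal 0 v)
        = Measure.pi (fun _ : Fin d => (volume : Measure ℝ).withDensity (gaussianPDF 0 v)) := by
          simp_rw [gaussianReal_of_var_ne_zero 0 hv]
      _ = (Measure.pi fun _ : Fin d => (volume : Measure ℝ)).withDensity
            (fun x => ∏ i, gaussianPDF 0 v (x i)) :=
          (@pi_withDensity_fin d (fun _ => ℝ) _ (fun _ => volume) _
            (fun _ => gaussianPDF 0 v) (fun _ => measurable_gaussianPDF 0 v) hsf).symm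
      _ = (volume : Measure (Fin d → ℝ)).withDensity (fun x => ENNReal.ofReal (P x)) := by
          rw [← volume_pi]
          congr 1
          funext x
          rw [hP_def, ENNReal.ofReal_prod_of_nonneg fun i _ => hp0 _]
          rfl
  have hGw : Measure.pi (fun _ : Fin d => gaussianReal 0 w)
      = (volume : Measure (Fin d → ℝ)).withDensity (fun x => ENNReal.ofReal (Q x)) := by
    haveI hsf : ∀ _i : Fin d, SigmaFinite ((volume : Measure ℝ).withDensity (gaussianPDF 0 w)) := by
      intro i
      rw [← gaussianReal_of_var_ne_zero 0 hw]
      infer_instance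
    calc Measure.pi (fun _ : Fin d => gaussianReal 0 w)
        = Measure.pi (fun _ : Fin d => (volume : Measure ℝ).withDensity (gaussianPDF 0 w)) := by
          simp_rw [gaussianReal_of_var_ne_zero 0 hw]
      _ = (Measure.pi fun _ : Fin d => (volume : Measure ℝ)).withDensity
            (fun x => ∏ i, gaussianPDF 0 w (x i)) :=
          (@pi_withDensity_fin d (fun _ => ℝ) _ (fun _ => volume) _
            (fun _ => gaussianPDF 0 w) (fun _ => measurable_gaussianPDF 0 w) hsf).symm
      _ = (volume : Measure (Fin d → ℝ)).withDensity (fun x => ENNReal.ofReal (Q x)) := by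
          rw [← volume_pi]
          congr 1
          funext x
          rw [hQ_def, ENNReal.ofReal_prod_of_nonneg fun i _ => hq0 _]
          rfl
  -- normalizations
  have hP1 : ∫⁻ x, ENNReal.ofReal (P x) = 1 := by
    have h := measure_univ (μ := Measure.pi fun _ : Fin d => gaussianReal 0 v)
    rwa [hGv, withDensity_apply _ MeasurableSet.univ, Measure.restrict_univ] at h
  have hQ1 : ∫⁻ x, ENNReal.ofReal (Q x) = 1 := by
    have h := measure_univ (μ := Measure.pi fun _ : Fin d => gaussianReal 0 w)
    rwa [hGw, withDensity_apply _ MeasurableSet.univ, Measure.restrict_univ] at h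
  -- Hellinger affinity
  set s1 : ℝ := Real.sqrt (2*σ*σt/(σ^2+σt^2)) with hs1_def
  have hs1_0 : 0 ≤ s1 := Real.sqrt_nonneg _
  have hs1_le : s1 ≤ 1 := by
    rw [hs1_def]
    rw [show (1:ℝ) = Real.sqrt 1 from (Real.sqrt_one).symm]
    apply Real.sqrt_le_sqrt
    rw [div_le_one (by positivity)]
    nlinarith [sq_nonneg (σ - σt)]
  have hsd : s1 ^ d ≤ 1 := pow_le_one₀ hs1_0 hs1_le
  have hR_int : Integrable R := by
    have := Integrable.fintype_prod (ι := Fin d)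
      (f := fun _ : Fin d => fun x : ℝ => Real.sqrt (p x * q x))
      (fun _ => gauss_hell_integrable σ σt hσ hσt)
    exact this
  have hAff : ∫⁻ x, ENNReal.ofReal (R x) = ENNReal.ofReal (s1 ^ d) := by
    rw [← ofReal_integral_eq_lintegral_ofReal hR_int (ae_of_all _ hR0)]
    congr 1
    calc ∫ x, R x = (∫ x, Real.sqrt (p x * q x)) ^ card (Fin d) :=
          integral_fintype_prod_eq_pow (ι := Fin d) (fun x : ℝ => Real.sqrt (p x * q x))
      _ = s1 ^ d := by rw [gauss_hellinger σ σt hσ hσt, card_fin]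
  -- main chain
  set Δ : ℝ≥0∞ := ∫⁻ x, ENNReal.ofReal (P x - Q x) with hd_def
  have hPQm : Measurable fun x => ENNReal.ofReal (P x - Q x) := (hPm.sub hQm).ennreal_ofReal
  have hQPm : Measurable fun x => ENNReal.ofReal (Q x - P x) := (hQm.sub hPm).ennreal_ofReal
  have hPom : Measurable fun x => ENNReal.ofReal (P x) := hPm.ennreal_ofReal
  have hQom : Measurable fun x => ENNReal.ofReal (Q x) := hQm.ennreal_ofReal
  have hsym : (∫⁻ x, ENNReal.ofReal (Q x - P x)) = Δ := by
    have key : ∫⁻ x, (ENNReal.ofReal (P x) + ENNReal.ofReal (Q x - P x))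
        = ∫⁻ x, (ENNReal.ofReal (Q x) + ENNReal.ofReal (P x - Q x)) := by
      apply lintegral_congr
      intro x
      rcases le_total (P x) (Q x) with h | h
      · rw [ENNReal.ofReal_of_nonpos (by linarith : P x - Q x ≤ 0), add_zero,
          ← ENNReal.ofReal_add (hP0 x) (by linarith : (0:ℝ) ≤ Q x - P x)]
        congr 1
        ring
      · rw [ENNReal.ofReal_of_nonpos (by linarith : Q x - P x ≤ 0), add_zero,
          ← ENNReal.ofReal_add (hQ0 x) (by linarith : (0:ℝ) ≤ P x - Q x)]
        congr 1
        ring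
    rw [lintegral_add_left hPom, lintegral_add_left hQom, hP1, hQ1] at key
    exact (ENNReal.add_right_inj ENNReal.one_ne_top).mp key
  have hstep3 : Measure.pi (fun _ : Fin d => gaussianReal 0 v) T
      ≤ Measure.pi (fun _ : Fin d => gaussianReal 0 w) T + Δ := by
    rw [hGv, hGw, withDensity_apply _ hT, withDensity_apply _ hT]
    calc ∫⁻ x in T, ENNReal.ofReal (P x)
        ≤ ∫⁻ x in T, (ENNReal.ofReal (Q x) + ENNReal.ofReal (P x - Q x)) := by
          apply lintegral_mono
          intro x
          show ENNReal.ofReal (P x) ≤ ENNReal.ofReal (Q x) + ENNReal.ofReal (P x - Q x)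
          rcases le_total (P x) (Q x) with h | h
          · exact le_add_right (ENNReal.ofReal_le_ofReal h)
          · rw [← ENNReal.ofReal_add (hQ0 x) (by linarith : (0:ℝ) ≤ P x - Q x)]
            apply ENNReal.ofReal_le_ofReal
            linarith
      _ = (∫⁻ x in T, ENNReal.ofReal (Q x)) + ∫⁻ x in T, ENNReal.ofReal (P x - Q x) :=
          lintegral_add_left hQom _
      _ ≤ (∫⁻ x in T, ENNReal.ofReal (Q x)) + Δ := by
          gcongr
          exact setLIntegral_le_lintegral _ _
  have hUm : Measurable fun x => ENNReal.ofReal |Real.sqrt (P x) - Real.sqrt (Q x)| :=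
    (hPm.sqrt.sub hQm.sqrt).abs.ennreal_ofReal
  have hVm : Measurable fun x => ENNReal.ofReal (Real.sqrt (P x) + Real.sqrt (Q x)) :=
    (hPm.sqrt.add hQm.sqrt).ennreal_ofReal
  have hconj : Real.HolderConjugate 2 2 := Real.HolderConjugate.two_two
  have hCS := ENNReal.lintegral_mul_le_Lp_mul_Lq volume hconj hUm.aemeasurable hVm.aemeasurable
  have hU2 : ∫⁻ x, (ENNReal.ofReal |Real.sqrt (P x) - Real.sqrt (Q x)|) ^ (2:ℝ)
      ≤ 2 - 2 * ENNReal.ofReal (s1 ^ d) := by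
    have hpt : ∀ x, (ENNReal.ofReal |Real.sqrt (P x) - Real.sqrt (Q x)|) ^ (2:ℝ)
        = ENNReal.ofReal ((Real.sqrt (P x) - Real.sqrt (Q x))^2) := by
      intro x
      rw [ENNReal.ofReal_rpow_of_nonneg (abs_nonneg _) (by norm_num),
        show ((2:ℝ)) = ((2:ℕ):ℝ) by norm_num, Real.rpow_natCast, sq_abs]
    simp_rw [hpt]
    apply ENNReal.le_sub_of_add_le_right
    · exact ENNReal.mul_ne_top (by norm_num) ENNReal.ofReal_ne_top
    rw [← hAff]
    have e3 : (∫⁻ x, ENNReal.ofReal ((Real.sqrt (P x) - Real.sqrt (Q x))^2))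
          + 2 * ∫⁻ x, ENNReal.ofReal (R x)
        = ∫⁻ x, (ENNReal.ofReal ((Real.sqrt (P x) - Real.sqrt (Q x))^2)
            + ENNReal.ofReal (2 * R x)) := by
      rw [lintegral_add_left (by exact ((hPm.sqrt.sub hQm.sqrt).pow_const 2).ennreal_ofReal :
        Measurable fun x => ENNReal.ofReal ((Real.sqrt (P x) - Real.sqrt (Q x))^2))]
      congr 1
      rw [← lintegral_const_mul 2 hRm.ennreal_ofReal]
      apply lintegral_congr
      intro x
      rw [ENNReal.ofReal_mul (by norm_num : (0:ℝ) ≤ 2), ENNReal.ofReal_ofNat]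
    rw [e3]
    have e4 : ∀ x, ENNReal.ofReal ((Real.sqrt (P x) - Real.sqrt (Q x))^2)
          + ENNReal.ofReal (2 * R x)
        = ENNReal.ofReal (P x) + ENNReal.ofReal (Q x) := by
      intro x
      rw [← ENNReal.ofReal_add (sq_nonneg _) (mul_nonneg (by norm_num) (hR0 x)),
        ← ENNReal.ofReal_add (hP0 x) (hQ0 x)]
      congr 1
      have e1 := Real.sq_sqrt (hP0 x)
      have e2 := Real.sq_sqrt (hQ0 x)
      rw [hRP x]
      nlinarith [e1, e2]
    simp_rw [e4]
    rw [lintegral_add_left hPom, hP1, hQ1]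
    norm_num
  have hV2 : ∫⁻ x, (ENNReal.ofReal (Real.sqrt (P x) + Real.sqrt (Q x))) ^ (2:ℝ) ≤ 4 := by
    have hpt : ∀ x, (ENNReal.ofReal (Real.sqrt (P x) + Real.sqrt (Q x))) ^ (2:ℝ)
        = ENNReal.ofReal ((Real.sqrt (P x) + Real.sqrt (Q x))^2) := by
      intro x
      rw [ENNReal.ofReal_rpow_of_nonneg (by positivity) (by norm_num),
        show ((2:ℝ)) = ((2:ℕ):ℝ) by norm_num, Real.rpow_natCast]
    simp_rw [hpt]
    calc ∫⁻ x, ENNReal.ofReal ((Real.sqrt (P x) + Real.sqrt (Q x))^2)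
        ≤ ∫⁻ x, (2 * ENNReal.ofReal (P x) + 2 * ENNReal.ofReal (Q x)) := by
          apply lintegral_mono
          intro x
          calc ENNReal.ofReal ((Real.sqrt (P x) + Real.sqrt (Q x))^2)
              ≤ ENNReal.ofReal (2 * P x + 2 * Q x) := by
                apply ENNReal.ofReal_le_ofReal
                have e1 := Real.sq_sqrt (hP0 x)
                have e2 := Real.sq_sqrt (hQ0 x)
                nlinarith [sq_nonneg (Real.sqrt (P x) - Real.sqrt (Q x))]
            _ = 2 * ENNReal.ofReal (P x) + 2 * ENNReal.ofReal (Q x) := by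
                rw [ENNReal.ofReal_add (by nlinarith [hP0 x] : (0:ℝ) ≤ 2 * P x)
                    (by nlinarith [hQ0 x] : (0:ℝ) ≤ 2 * Q x),
                  ENNReal.ofReal_mul (by norm_num : (0:ℝ) ≤ 2),
                  ENNReal.ofReal_mul (by norm_num : (0:ℝ) ≤ 2), ENNReal.ofReal_ofNat]
      _ = 4 := by
          rw [lintegral_add_left (hPom.const_mul 2), lintegral_const_mul 2 hPom,
            lintegral_const_mul 2 hQom, hP1, hQ1]
          norm_num
  have h4 : (4:ℝ≥0∞) ^ (1/2:ℝ) = 2 := by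
    rw [show (4:ℝ≥0∞) = (2:ℝ≥0∞)^(2:ℕ) by norm_num, ← ENNReal.rpow_natCast,
      ← ENNReal.rpow_mul]
    norm_num
  have habs2 : ∀ x, ENNReal.ofReal |P x - Q x|
      = ENNReal.ofReal |Real.sqrt (P x) - Real.sqrt (Q x)|
        * ENNReal.ofReal (Real.sqrt (P x) + Real.sqrt (Q x)) := by
    intro x
    rw [← ENNReal.ofReal_mul (abs_nonneg _)]
    congr 1
    have e1 := Real.sq_sqrt (hP0 x)
    have e2 := Real.sq_sqrt (hQ0 x)
    rw [← abs_of_nonneg (by positivity : (0:ℝ) ≤ Real.sqrt (P x) + Real.sqrt (Q x)), ← abs_mul]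
    congr 1
    linear_combination e2 - e1
  have h2D : Δ + Δ ≤ (2 - 2 * ENNReal.ofReal (s1 ^ d)) ^ (1/2:ℝ) * 2 := by
    have hDD : Δ + Δ = ∫⁻ x, ENNReal.ofReal |P x - Q x| := by
      conv_lhs => rw [show Δ + Δ = (∫⁻ x, ENNReal.ofReal (P x - Q x))
        + ∫⁻ x, ENNReal.ofReal (Q x - P x) from by rw [hsym]]
      rw [← lintegral_add_left hPQm]
      apply lintegral_congr
      intro x
      rcases le_total (P x) (Q x) with h | h
      · rw [ENNReal.ofReal_of_nonpos (by linarith : P x - Q x ≤ 0), zero_add,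
          abs_of_nonpos (by linarith : P x - Q x ≤ 0)]
        congr 1
        ring
      · rw [ENNReal.ofReal_of_nonpos (by linarith : Q x - P x ≤ 0), add_zero,
          abs_of_nonneg (by linarith : (0:ℝ) ≤ P x - Q x)]
    rw [hDD]
    calc ∫⁻ x, ENNReal.ofReal |P x - Q x|
        = ∫⁻ x, ENNReal.ofReal |Real.sqrt (P x) - Real.sqrt (Q x)|
            * ENNReal.ofReal (Real.sqrt (P x) + Real.sqrt (Q x)) := lintegral_congr habs2
      _ ≤ (∫⁻ x, (ENNReal.ofReal |Real.sqrt (P x) - Real.sqrt (Q x)|) ^ (2:ℝ)) ^ (1/2:ℝ)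
            * (∫⁻ x, (ENNReal.ofReal (Real.sqrt (P x) + Real.sqrt (Q x))) ^ (2:ℝ)) ^ (1/2:ℝ) := hCS
      _ ≤ (2 - 2 * ENNReal.ofReal (s1 ^ d)) ^ (1/2:ℝ) * (4:ℝ≥0∞) ^ (1/2:ℝ) := by
          exact mul_le_mul' (ENNReal.rpow_le_rpow hU2 (by norm_num))
            (ENNReal.rpow_le_rpow hV2 (by norm_num))
      _ = (2 - 2 * ENNReal.ofReal (s1 ^ d)) ^ (1/2:ℝ) * 2 := by rw [h4]
  have hDle : Δ ≤ (2 - 2 * ENNReal.ofReal (s1 ^ d)) ^ (1/2:ℝ) := by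
    have h2 : (2:ℝ≥0∞) * Δ ≤ 2 * ((2 - 2 * ENNReal.ofReal (s1 ^ d)) ^ (1/2:ℝ)) := by
      calc (2:ℝ≥0∞) * Δ = Δ + Δ := (two_mul Δ)
        _ ≤ (2 - 2 * ENNReal.ofReal (s1 ^ d)) ^ (1/2:ℝ) * 2 := h2D
        _ = 2 * ((2 - 2 * ENNReal.ofReal (s1 ^ d)) ^ (1/2:ℝ)) := mul_comm _ _
    exact (ENNReal.mul_le_mul_iff_right (by norm_num) (by norm_num)).mp h2
  have hfin : (2 - 2 * ENNReal.ofReal (s1 ^ d)) ^ (1/2:ℝ)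
      = ENNReal.ofReal (Real.sqrt (2 - 2 * s1 ^ d)) := by
    have hsd0 : (0:ℝ) ≤ s1 ^ d := pow_nonneg hs1_0 d
    have h1 : (2:ℝ≥0∞) - 2 * ENNReal.ofReal (s1 ^ d) = ENNReal.ofReal (2 - 2 * s1 ^ d) := by
      rw [ENNReal.ofReal_sub _ (by nlinarith : (0:ℝ) ≤ 2 * s1 ^ d),
        ENNReal.ofReal_mul (by norm_num : (0:ℝ) ≤ 2), ENNReal.ofReal_ofNat]
    rw [h1, ENNReal.ofReal_rpow_of_nonneg (x := 2 - 2 * s1 ^ d) (p := 1/2)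
      (by nlinarith : (0:ℝ) ≤ 2 - 2 * s1 ^ d) (by norm_num), ← Real.sqrt_eq_rpow]
  calc Measure.pi (fun _ : Fin d => gaussianReal 0 v) T
      ≤ Measure.pi (fun _ : Fin d => gaussianReal 0 w) T + Δ := hstep3
    _ ≤ Measure.pi (fun _ : Fin d => gaussianReal 0 w) T
        + ENNReal.ofReal (Real.sqrt (2 - 2 * s1 ^ d)) := by
        gcongr
        rw [← hfin]
        exact hDle

theorem eps_bound (σ σt : ℝ) (hσ : 0 < σ) (hσt : 0 < σt) (d : ℕ) :
    Real.sqrt (2 - 2 * Real.sqrt (2*σ*σt/(σ^2+σt^2)) ^ d)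
      ≤ (1/2) * Real.sqrt (|σ^2 - σt^2| * d / min (σ^2) (σt^2)) := by
  have hmin : (0:ℝ) < min (σ^2) (σt^2) := lt_min (by positivity) (by positivity)
  set s1 : ℝ := Real.sqrt (2*σ*σt/(σ^2+σt^2)) with hs1_def
  have hs1_0 : 0 ≤ s1 := Real.sqrt_nonneg _
  have hs1_le : s1 ≤ 1 := by
    rw [hs1_def, show (1:ℝ) = Real.sqrt 1 from (Real.sqrt_one).symm]
    apply Real.sqrt_le_sqrt
    rw [div_le_one (by positivity)]
    nlinarith [sq_nonneg (σ - σt)]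
  have hs1sq : s1^2 = 2*σ*σt/(σ^2+σt^2) := Real.sq_sqrt (by positivity)
  have hd0 : (0:ℝ) ≤ (d:ℝ) := Nat.cast_nonneg d
  have hbern : 1 - s1^d ≤ (d:ℝ) * (1 - s1) := by
    have h := one_add_mul_le_pow (a := s1 - 1) (by nlinarith : (-2:ℝ) ≤ s1 - 1) d
    have h2 : (1 + (s1 - 1)) = s1 := by ring
    rw [h2] at h
    nlinarith
  have hfrac : 1 - s1^2 = (σ-σt)^2/(σ^2+σt^2) := by
    rw [hs1sq]
    field_simp
    ring
  have hchain : 2 - 2*s1^d ≤ 2*(d:ℝ)*((σ-σt)^2/(σ^2+σt^2)) := by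
    have h1 : 1 - s1 ≤ 1 - s1^2 := by nlinarith
    have h2 : (2:ℝ) - 2*s1^d ≤ 2*(d:ℝ)*(1 - s1^2) := by nlinarith
    rw [← hfrac]
    exact h2
  have hlast : 2*(d:ℝ)*((σ-σt)^2/(σ^2+σt^2))
      ≤ |σ^2 - σt^2| * d / (4 * min (σ^2) (σt^2)) := by
    rw [show 2*(d:ℝ)*((σ-σt)^2/(σ^2+σt^2)) = (2*(d:ℝ)*(σ-σt)^2)/(σ^2+σt^2) from by ring]
    rcases le_total σt σ with hle | hle
    · rw [abs_of_nonneg (by nlinarith : (0:ℝ) ≤ σ^2 - σt^2),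
        min_eq_right (by nlinarith : σt^2 ≤ σ^2)]
      rw [div_le_div_iff₀ (by positivity) (by positivity)]
      have ha : (0:ℝ) ≤ σ - σt := by linarith
      have hcore : 8*σt^2*(σ-σt)^2 ≤ (σ^2-σt^2)*(σ^2+σt^2) := by
        nlinarith [mul_nonneg ha (mul_nonneg (sq_nonneg (σ-2*σt)) (by positivity : (0:ℝ) ≤ σ+2*σt)),
          mul_nonneg ha (mul_nonneg hσt.le (sq_nonneg (2*σ-σt))),
          mul_nonneg ha (mul_nonneg hσt.le (sq_nonneg σt))]
      nlinarith [mul_le_mul_of_nonneg_left hcore hd0]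
    · rw [abs_of_nonpos (by nlinarith : σ^2 - σt^2 ≤ 0),
        min_eq_left (by nlinarith : σ^2 ≤ σt^2)]
      rw [div_le_div_iff₀ (by positivity) (by positivity)]
      have ha : (0:ℝ) ≤ σt - σ := by linarith
      have hcore : 8*σ^2*(σt-σ)^2 ≤ (σt^2-σ^2)*(σ^2+σt^2) := by
        nlinarith [mul_nonneg ha (mul_nonneg (sq_nonneg (σt-2*σ)) (by positivity : (0:ℝ) ≤ σt+2*σ)),
          mul_nonneg ha (mul_nonneg hσ.le (sq_nonneg (2*σt-σ))),
          mul_nonneg ha (mul_nonneg hσ.le (sq_nonneg σ))]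
      nlinarith [mul_le_mul_of_nonneg_left hcore hd0]
  have hX0 : (0:ℝ) ≤ |σ^2 - σt^2| * d / min (σ^2) (σt^2) := by positivity
  calc Real.sqrt (2 - 2 * s1 ^ d)
      ≤ Real.sqrt (|σ^2 - σt^2| * d / (4 * min (σ^2) (σt^2))) :=
        Real.sqrt_le_sqrt (le_trans hchain hlast)
    _ = Real.sqrt ((|σ^2 - σt^2| * d / min (σ^2) (σt^2))/4) := by
        congr 1
        ring
    _ = (1/2) * Real.sqrt (|σ^2 - σt^2| * d / min (σ^2) (σt^2)) := by
        rw [Real.sqrt_div hX0, show Real.sqrt 4 = 2 from by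
          rw [show (4:ℝ) = 2^2 by norm_num, Real.sqrt_sq (by norm_num : (0:ℝ) ≤ 2)]]
        ring

/-- The general noisy-response distribution map: the pushforward of the base distribution
tensored with Gaussian perception noise N(0, σ²I_d) under ((x,y),ξ) ↦ (ρ(x, θ+ξ), y). -/
noncomputable def noisyMapGen {E : Type*} [MeasurableSpace E] {d : ℕ}
    (DB : Measure (E × Bool)) (ρ : E → (Fin d → ℝ) → E) (σ : ℝ) (θ : Fin d → ℝ) :
    Measure (E × Bool) :=
  Measure.map (fun q : (E × Bool) × (Fin d → ℝ) => (ρ q.1.1 (θ + q.2), q.1.2))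
    (DB.prod (Measure.pi fun _ : Fin d => gaussianReal 0 ⟨σ ^ 2, sq_nonneg σ⟩))

/-- Lemma 2 (robustness of the noisy-response distribution to an error in
the noise parameter, in total variation distance). -/
theorem stmt14 {E : Type*} [MeasurableSpace E] {d : ℕ}
    (DB : Measure (E × Bool)) [IsProbabilityMeasure DB]
    (ρ : E → (Fin d → ℝ) → E)
    (hρ : Measurable fun q : E × (Fin d → ℝ) => ρ q.1 q.2)
    (σ σt : ℝ) (hσ : 0 < σ) (hσt : 0 < σt) (θ : Fin d → ℝ)
    (A : Set (E × Bool)) (hA : MeasurableSet A) :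
    |(noisyMapGen DB ρ σ θ A).toReal - (noisyMapGen DB ρ σt θ A).toReal| ≤
      (1 / 2) * Real.sqrt (|σ ^ 2 - σt ^ 2| * d / min (σ ^ 2) (σt ^ 2)) := by
  haveI : ∀ s : ℝ, IsProbabilityMeasure (gaussianReal 0 ⟨s ^ 2, sq_nonneg s⟩) :=
    fun s => instIsProbabilityMeasureGaussianReal _ _
  set Gv : Measure (Fin d → ℝ) :=
    Measure.pi (fun _ : Fin d => gaussianReal 0 ⟨σ ^ 2, sq_nonneg σ⟩) with hGv_def
  set Gw : Measure (Fin d → ℝ) :=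
    Measure.pi (fun _ : Fin d => gaussianReal 0 ⟨σt ^ 2, sq_nonneg σt⟩) with hGw_def
  set F : (E × Bool) × (Fin d → ℝ) → E × Bool :=
    fun q => (ρ q.1.1 (θ + q.2), q.1.2) with hF_def
  have hF : Measurable F := by
    apply Measurable.prodMk
    · exact hρ.comp ((measurable_fst.fst).prodMk (measurable_const.add measurable_snd))
    · exact measurable_fst.snd
  set ε : ℝ := Real.sqrt (2 - 2 * Real.sqrt (2*σ*σt/(σ^2+σt^2)) ^ d) with hε_def
  have hε0 : 0 ≤ ε := Real.sqrt_nonneg _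
  have hone : ∀ S : Set ((E × Bool) × (Fin d → ℝ)), MeasurableSet S →
      (DB.prod Gv) S ≤ (DB.prod Gw) S + ENNReal.ofReal ε := by
    intro S hS
    rw [Measure.prod_apply hS, Measure.prod_apply hS]
    calc ∫⁻ x, Gv (Prod.mk x ⁻¹' S) ∂DB
        ≤ ∫⁻ x, (Gw (Prod.mk x ⁻¹' S) + ENNReal.ofReal ε) ∂DB :=
          lintegral_mono fun x =>
            gauss_pi_diff σ σt hσ hσt _ (measurable_prodMk_left hS)
      _ = ∫⁻ x, Gw (Prod.mk x ⁻¹' S) ∂DB + ENNReal.ofReal ε := by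
          rw [lintegral_add_right _ measurable_const, lintegral_const, measure_univ, mul_one]
  have hone' : ∀ S : Set ((E × Bool) × (Fin d → ℝ)), MeasurableSet S →
      (DB.prod Gw) S ≤ (DB.prod Gv) S + ENNReal.ofReal ε := by
    intro S hS
    have hsymm : Real.sqrt (2 - 2 * Real.sqrt (2*σt*σ/(σt^2+σ^2)) ^ d) = ε := by
      rw [hε_def, show 2*σt*σ/(σt^2+σ^2) = 2*σ*σt/(σ^2+σt^2) from by ring]
    rw [Measure.prod_apply hS, Measure.prod_apply hS]
    calc ∫⁻ x, Gw (Prod.mk x ⁻¹' S) ∂DB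
        ≤ ∫⁻ x, (Gv (Prod.mk x ⁻¹' S) + ENNReal.ofReal ε) ∂DB := by
          apply lintegral_mono fun x => ?_
          have h := gauss_pi_diff σt σ hσt hσ (Prod.mk x ⁻¹' S) (measurable_prodMk_left hS)
          rwa [hsymm] at h
      _ = ∫⁻ x, Gv (Prod.mk x ⁻¹' S) ∂DB + ENNReal.ofReal ε := by
          rw [lintegral_add_right _ measurable_const, lintegral_const, measure_univ, mul_one]
  have e1 : noisyMapGen DB ρ σ θ A = (DB.prod Gv) (F ⁻¹' A) := by
    rw [noisyMapGen, Measure.map_apply hF hA]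
  have e2 : noisyMapGen DB ρ σt θ A = (DB.prod Gw) (F ⁻¹' A) := by
    rw [noisyMapGen, Measure.map_apply hF hA]
  have hSA : MeasurableSet (F ⁻¹' A) := hF hA
  have hab : (noisyMapGen DB ρ σ θ A).toReal - (noisyMapGen DB ρ σt θ A).toReal ≤ ε := by
    have h := hone (F ⁻¹' A) hSA
    have h2 := ENNReal.toReal_mono
      (by exact ENNReal.add_ne_top.mpr ⟨measure_ne_top _ _, ENNReal.ofReal_ne_top⟩) h
    rw [ENNReal.toReal_add (measure_ne_top _ _) ENNReal.ofReal_ne_top,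
      ENNReal.toReal_ofReal hε0] at h2
    rw [e1, e2]
    linarith
  have hba : (noisyMapGen DB ρ σt θ A).toReal - (noisyMapGen DB ρ σ θ A).toReal ≤ ε := by
    have h := hone' (F ⁻¹' A) hSA
    have h2 := ENNReal.toReal_mono
      (by exact ENNReal.add_ne_top.mpr ⟨measure_ne_top _ _, ENNReal.ofReal_ne_top⟩) h
    rw [ENNReal.toReal_add (measure_ne_top _ _) ENNReal.ofReal_ne_top,
      ENNReal.toReal_ofReal hε0] at h2
    rw [e1, e2]
    linarith
  have hεb := eps_bound σ σt hσ hσt d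
  rw [abs_sub_le_iff]
  constructor
  · calc _ ≤ ε := hab
      _ ≤ _ := hεb
  · calc _ ≤ ε := hba
      _ ≤ _ := hεb
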